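/- If φ_1,...,φ_n are unit vectors in a d-dimensional complex inner product space with n ≥ d, then max_{j≠j'} |⟨φ_j, φ_{j'}⟩|² ≥ (n-d)/(d(n-1)). -/

import Mathlib

open Finset in
private lemma sum_swap4 {M : Type*} [AddCommMonoid M] {ι₁ ι₂ ι₃ ι₄ : Type*}
    [Fintype ι₁] [Fintype ι₂] [Fintype ι₃] [Fintype ι₄] (F : ι₁ → ι₂ → ι₃ → ι₄ → M) :
    ∑ a, ∑ b, ∑ c, ∑ e, F a b c e = ∑ c, ∑ e, ∑ a, ∑ b, F a b c e :=
  calc ∑ a, ∑ b, ∑ c, ∑ e, F a b c e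
      = ∑ a, ∑ c, ∑ b, ∑ e, F a b c e :=
        Finset.sum_congr rfl fun _ _ => Finset.sum_comm
    _ = ∑ c, ∑ a, ∑ b, ∑ e, F a b c e := Finset.sum_comm
    _ = ∑ c, ∑ a, ∑ e, ∑ b, F a b c e :=
        Finset.sum_congr rfl fun _ _ => Finset.sum_congr rfl fun _ _ => Finset.sum_comm
    _ = ∑ c, ∑ e, ∑ a, ∑ b, F a b c e :=
        Finset.sum_congr rfl fun _ _ => Finset.sum_comm

/-- Welch bound: for `n ≥ d` unit vectors in a `d`-dimensional complex inner
product space, `max_{j≠j'} |⟨φ_j, φ_{j'}⟩|² ≥ (n-d)/(d(n-1))`. -/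
theorem welch_bound {H : Type*} [NormedAddCommGroup H] [InnerProductSpace ℂ H]
    {d n : ℕ} (hd : 1 ≤ d) (hdim : Module.finrank ℂ H = d) (hn : d ≤ n) (hn2 : 2 ≤ n)
    (φ : Fin n → H) (hunit : ∀ j, ‖φ j‖ = 1) :
    ∃ j j', j ≠ j' ∧
      ((n : ℝ) - d) / (d * ((n : ℝ) - 1)) ≤ ‖(inner ℂ (φ j) (φ j') : ℂ)‖ ^ 2 := by
  have hfd : FiniteDimensional ℂ H := FiniteDimensional.of_finrank_pos (by omega)
  let e : OrthonormalBasis (Fin d) ℂ H :=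
    (stdOrthonormalBasis ℂ H).reindex (finCongr hdim)
  set A : Fin d → Fin n → ℂ := fun i j => inner ℂ (e i) (φ j) with hA
  set C : Fin n → Fin n → ℂ := fun j j' => inner ℂ (φ j) (φ j') with hC
  have hCsum : ∀ j j', C j j' = ∑ i, starRingEnd ℂ (A i j) * A i j' := by
    intro j j'
    have := e.sum_inner_mul_inner (φ j) (φ j')
    show (inner ℂ (φ j) (φ j') : ℂ) = _
    rw [← this]
    congr 1; funext i
    rw [hA]
    simp [inner_conj_symm]
  set B : Fin d → Fin d → ℂ := fun i i' => ∑ j, A i j * starRingEnd ℂ (A i' j) with hB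
  -- key 4-fold sum identity
  have key : ∑ j, ∑ j', C j j' * starRingEnd ℂ (C j j')
      = ∑ i, ∑ i', B i i' * starRingEnd ℂ (B i i') := by
    have h1 : ∀ j j', C j j' * starRingEnd ℂ (C j j')
        = ∑ i, ∑ i', (starRingEnd ℂ (A i j) * A i j') * (A i' j * starRingEnd ℂ (A i' j')) := by
      intro j j'
      rw [hCsum, map_sum, Finset.sum_mul_sum]
      congr 1; funext i; congr 1; funext i'
      simp only [map_mul, RingHomInvPair.comp_eq, starRingEnd_self_apply]
      try ring
    have h2 : ∀ i i', B i i' * starRingEnd ℂ (B i i')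
        = ∑ j, ∑ j', (starRingEnd ℂ (A i j) * A i j') * (A i' j * starRingEnd ℂ (A i' j')) := by
      intro i i'
      rw [hB, map_sum, Finset.sum_mul_sum, Finset.sum_comm]
      congr 1; funext j; congr 1; funext j'
      simp only [map_mul, RingHomInvPair.comp_eq, starRingEnd_self_apply]
      try ring
    simp_rw [h1, h2]
    exact sum_swap4 _
  -- turn into real sums of squared norms
  have hz : ∀ z : ℂ, z * starRingEnd ℂ z = ((‖z‖ : ℝ) : ℂ) ^ 2 := by
    intro z
    rw [Complex.mul_conj, Complex.normSq_eq_norm_sq]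
    push_cast; ring
  set TC : ℝ := ∑ j, ∑ j', ‖C j j'‖ ^ 2 with hTC
  set TB : ℝ := ∑ i, ∑ i', ‖B i i'‖ ^ 2 with hTB
  have keyR : TC = TB := by
    have : ((TC : ℝ) : ℂ) = ((TB : ℝ) : ℂ) := by
      rw [hTC, hTB]; push_cast
      simp_rw [← hz]
      exact key
    exact_mod_cast this
  set r : Fin d → ℝ := fun i => ∑ j, ‖A i j‖ ^ 2 with hr
  have hBii : ∀ i, B i i = ((r i : ℝ) : ℂ) := by
    intro i
    rw [hB, hr]; push_cast
    exact Finset.sum_congr rfl fun j _ => hz _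
  have hrnn : ∀ i, 0 ≤ r i := by
    intro i; rw [hr]; positivity
  -- trace of B equals n
  have htr : ∑ i, r i = (n : ℝ) := by
    have h1 : ∀ j : Fin n, ∑ i, ‖A i j‖ ^ 2 = 1 := by
      intro j
      have h2 := e.sum_inner_mul_inner (φ j) (φ j)
      have h3 : (inner ℂ (φ j) (φ j) : ℂ) = ((1 : ℝ) : ℂ) := by
        rw [inner_self_eq_norm_sq_to_K, hunit]; norm_num
      have h4 : ∀ i : Fin d, (inner ℂ (φ j) (e i) * inner ℂ (e i) (φ j) : ℂ)
          = ((‖A i j‖ : ℝ) : ℂ) ^ 2 := by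
        intro i
        have hw : (inner ℂ (φ j) (e i) : ℂ) = starRingEnd ℂ (A i j) := by
          rw [hA, ← inner_conj_symm]
        rw [hw, mul_comm]
        exact hz (A i j)
      rw [h3] at h2
      simp_rw [h4] at h2
      have h5 : ((∑ i, ‖A i j‖ ^ 2 : ℝ) : ℂ) = ((1 : ℝ) : ℂ) := by
        push_cast
        exact h2
      exact_mod_cast h5
    rw [hr]
    rw [Finset.sum_comm]
    simp_rw [h1]
    simp
  -- Cauchy-Schwarz: n^2 ≤ d * TB
  have hCS : (n : ℝ) ^ 2 ≤ d * TB := by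
    have h1 : (∑ i, r i) ^ 2 ≤ (((Finset.univ : Finset (Fin d)).card : ℕ) : ℝ) * ∑ i : Fin d, r i ^ 2 := by
      exact_mod_cast sq_sum_le_card_mul_sum_sq (s := (Finset.univ : Finset (Fin d))) (f := r)
    rw [htr, Finset.card_univ, Fintype.card_fin] at h1
    have h2 : ∑ i : Fin d, r i ^ 2 ≤ TB := by
      rw [hTB]
      refine Finset.sum_le_sum fun i _ => ?_
      have h3 : r i ^ 2 = ‖B i i‖ ^ 2 := by
        rw [hBii]
        rw [Complex.norm_real, Real.norm_eq_abs, abs_of_nonneg (hrnn i)]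
      rw [h3]
      exact Finset.single_le_sum (f := fun i' => ‖B i i'‖ ^ 2) (fun i' _ => by positivity) (Finset.mem_univ i)
    calc (n : ℝ) ^ 2 ≤ d * ∑ i : Fin d, r i ^ 2 := h1
      _ ≤ d * TB := by
          have : (0:ℝ) ≤ d := by positivity
          nlinarith
  -- diagonal of C
  have hCjj : ∀ j, ‖C j j‖ ^ 2 = 1 := by
    intro j
    have : C j j = ((1 : ℝ) : ℂ) := by
      rw [hC]; show (inner ℂ (φ j) (φ j) : ℂ) = _
      rw [inner_self_eq_norm_sq_to_K, hunit]; norm_num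
    rw [this]; simp
  -- off-diagonal sum
  set g : Fin n × Fin n → ℝ := fun p => ‖C p.1 p.2‖ ^ 2 with hg
  have hsplit : ∑ p ∈ (Finset.univ : Finset (Fin n)).offDiag, g p = TC - n := by
    have h1 : ∑ p ∈ (Finset.univ : Finset (Fin n)) ×ˢ Finset.univ, g p = TC := by
      rw [hTC, Finset.sum_product]
    have h2 : ∑ p ∈ (Finset.univ : Finset (Fin n)).diag, g p = (n : ℝ) := by
      rw [Finset.sum_diag]
      have h2a : ∑ x : Fin n, g (x, x) = ∑ _x : Fin n, (1 : ℝ) :=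
        Finset.sum_congr rfl fun x _ => hCjj x
      rw [h2a]
      simp
    have h3 := Finset.sum_union (Finset.disjoint_diag_offDiag (Finset.univ : Finset (Fin n)))
      (f := g)
    rw [Finset.diag_union_offDiag, h1, h2] at h3
    linarith
  -- conclude
  have hne : ((Finset.univ : Finset (Fin n)).offDiag).Nonempty := by
    refine ⟨(⟨0, by omega⟩, ⟨1, by omega⟩), ?_⟩
    rw [Finset.mem_offDiag]
    refine ⟨Finset.mem_univ _, Finset.mem_univ _, ?_⟩
    simp [Fin.ext_iff]
  set b : ℝ := ((n : ℝ) - d) / (d * ((n : ℝ) - 1)) with hb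
  have hsum : ∑ _p ∈ (Finset.univ : Finset (Fin n)).offDiag, b
      ≤ ∑ p ∈ (Finset.univ : Finset (Fin n)).offDiag, g p := by
    rw [Finset.sum_const, Finset.offDiag_card, Finset.card_univ, Fintype.card_fin, hsplit]
    have hcard : ((n * n - n : ℕ) : ℝ) = (n : ℝ) * ((n : ℝ) - 1) := by
      have : n ≤ n * n := Nat.le_mul_of_pos_left n (by omega)
      push_cast [Nat.cast_sub this]
      ring
    rw [nsmul_eq_mul, hcard, hb]
    have hd0 : (0:ℝ) < d := by
      have : (1:ℝ) ≤ d := by exact_mod_cast hd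
      linarith
    have hn1 : (0:ℝ) < (n:ℝ) - 1 := by
      have : (2:ℝ) ≤ n := by exact_mod_cast hn2
      linarith
    have hTCge : (n:ℝ) ^ 2 / d ≤ TC := by
      rw [keyR, div_le_iff₀ hd0]
      linarith [hCS]
    have key2 : (n : ℝ) * ((n : ℝ) - 1) * (((n : ℝ) - d) / (d * ((n : ℝ) - 1)))
        = (n : ℝ) ^ 2 / d - n := by
      field_simp
    rw [key2]
    linarith
  obtain ⟨p, hp, hle⟩ := Finset.exists_le_of_sum_le hne hsum
  rw [Finset.mem_offDiag] at hp
  exact ⟨p.1, p.2, hp.2.2, hle⟩
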